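/- Let α > 1, c > 0, and let (F_k)_{k≥0} be a nonnegative nonincreasing sequence satisfying F_k - F_{k+1} ≥ c·F_k^α for all k ≥ 0. Then for all k ≥ 0: F_k ≤ (F_0^{α-1} / (F_0^{α-1}·c·(α-1)·k + 1))^{1/(α-1)}. -/

import Mathlib

/-- Convexity-type inequality for negative powers: for `0 < b ≤ a` and `β > 0`,
`b^(-β) ≥ a^(-β) + β a^(-β-1)(a-b)`. -/
lemma neg_rpow_step (β : ℝ) (hβ : 0 < β) {a b : ℝ} (hb : 0 < b) (hba : b ≤ a) :
    a ^ (-β) + β * a ^ (-β - 1) * (a - b) ≤ b ^ (-β) := by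
  have ha : 0 < a := lt_of_lt_of_le hb hba
  have hq : 0 < b / a := div_pos hb ha
  -- b^(-β) = a^(-β) * (b/a)^(-β)
  have hsplit : b ^ (-β) = a ^ (-β) * (b / a) ^ (-β) := by
    rw [Real.div_rpow hb.le ha.le, mul_div_assoc']
    rw [mul_comm, mul_div_assoc, div_self (ne_of_gt (Real.rpow_pos_of_pos ha _)), mul_one]
  -- (b/a)^(-β) ≥ 1 + β*(1 - b/a)
  have hexp : 1 + β * (1 - b / a) ≤ (b / a) ^ (-β) := by
    rw [Real.rpow_def_of_pos hq]
    have h1 : Real.log (b / a) * (-β) + 1 ≤ Real.exp (Real.log (b / a) * (-β)) :=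
      Real.add_one_le_exp _
    have h2 : Real.log (b / a) ≤ b / a - 1 := Real.log_le_sub_one_of_pos hq
    nlinarith [h1, h2, hβ]
  have hapos : 0 < a ^ (-β) := Real.rpow_pos_of_pos ha _
  have hsum : a ^ (-β - 1) = a ^ (-β) * a⁻¹ := by
    rw [show (-β - 1 : ℝ) = -β + (-1) by ring, Real.rpow_add ha, Real.rpow_neg_one]
  have hdiv : β * a ^ (-β - 1) * (a - b) = a ^ (-β) * (β * (1 - b / a)) := by
    rw [hsum]; field_simp
  calc a ^ (-β) + β * a ^ (-β - 1) * (a - b)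
      = a ^ (-β) * (1 + β * (1 - b / a)) := by rw [hdiv]; ring
    _ ≤ a ^ (-β) * ((b / a) ^ (-β)) := by
        exact mul_le_mul_of_nonneg_left hexp hapos.le
    _ = b ^ (-β) := hsplit.symm

/-- Rate of convergence for a nonnegative nonincreasing sequence satisfying
`F_k - F_{k+1} ≥ c·F_k^α` with `α > 1`. -/
theorem stmt8 (α c : ℝ) (hα : 1 < α) (hc : 0 < c) (F : ℕ → ℝ)
    (hnn : ∀ k, 0 ≤ F k) (hmono : ∀ k, F (k + 1) ≤ F k)
    (hrec : ∀ k, F k - F (k + 1) ≥ c * F k ^ α) :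
    ∀ k : ℕ, F k ≤
      (F 0 ^ (α - 1) / (F 0 ^ (α - 1) * c * (α - 1) * k + 1)) ^ (1 / (α - 1)) := by
  intro k
  set β : ℝ := α - 1 with hβdef
  have hβ : 0 < β := by simp only [hβdef]; linarith
  have hβne : β ≠ 0 := ne_of_gt hβ
  by_cases hk : F k ≤ 0
  · -- trivial case F k = 0
    have hFk : F k = 0 := le_antisymm hk (hnn k)
    rw [hFk]
    apply Real.rpow_nonneg
    apply div_nonneg (Real.rpow_nonneg (hnn 0) _)
    have h1 : (0:ℝ) ≤ F 0 ^ β := Real.rpow_nonneg (hnn 0) _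
    have h2 : (0:ℝ) ≤ (k : ℝ) := Nat.cast_nonneg k
    have := mul_nonneg (mul_nonneg (mul_nonneg h1 hc.le) hβ.le) h2
    linarith
  · push_neg at hk
    have anti : ∀ i j : ℕ, i ≤ j → F j ≤ F i := fun i j h =>
      antitone_nat_of_succ_le hmono h
    have hF0 : 0 < F 0 := lt_of_lt_of_le hk (anti 0 k (Nat.zero_le k))
    -- key induction: F_n^{-β} ≥ F_0^{-β} + cβn while positive
    have key : ∀ n : ℕ, 0 < F n → (F 0) ^ (-β) + c * β * n ≤ (F n) ^ (-β) := by
      intro n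
      induction n with
      | zero => intro _; simp
      | succ n ih =>
        intro hpos
        have hFn : 0 < F n := lt_of_lt_of_le hpos (hmono n)
        have h1 := neg_rpow_step β hβ hpos (hmono n)
        have h2 : c * F n ^ α ≤ F n - F (n + 1) := hrec n
        have h3 : F n ^ (-β - 1) * F n ^ α = 1 := by
          rw [← Real.rpow_add hFn]
          have h0 : -β - 1 + α = 0 := by simp only [hβdef]; ring
          rw [h0, Real.rpow_zero]
        have hpow : 0 < F n ^ (-β - 1) := Real.rpow_pos_of_pos hFn _
        have ihn := ih hFn
        have h4 : c ≤ F n ^ (-β - 1) * (F n - F (n + 1)) := by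
          have hm := mul_le_mul_of_nonneg_left h2 hpow.le
          calc c = F n ^ (-β - 1) * (c * F n ^ α) := by
                rw [show F n ^ (-β - 1) * (c * F n ^ α)
                    = c * (F n ^ (-β - 1) * F n ^ α) by ring, h3, mul_one]
            _ ≤ _ := hm
        have h5 : β * c ≤ β * (F n ^ (-β - 1) * (F n - F (n + 1))) :=
          mul_le_mul_of_nonneg_left h4 hβ.le
        have step : F n ^ (-β) + c * β ≤ F (n + 1) ^ (-β) := by nlinarith [h1, h5]
        push_cast
        nlinarith [ihn, step]
    have hG := key k hk
    have hA : 0 < F 0 ^ β := Real.rpow_pos_of_pos hF0 β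
    have hD : 0 < F 0 ^ β * c * β * (k : ℝ) + 1 := by
      have h1 : (0:ℝ) ≤ F 0 ^ β := hA.le
      have h2 : (0:ℝ) ≤ (k : ℝ) := Nat.cast_nonneg k
      have := mul_nonneg (mul_nonneg (mul_nonneg h1 hc.le) hβ.le) h2
      linarith
    have hkβ : 0 < F k ^ β := Real.rpow_pos_of_pos hk β
    rw [Real.rpow_neg (hnn 0), Real.rpow_neg (hnn k)] at hG
    have hle : F k ^ β * (F 0 ^ β * c * β * (k : ℝ) + 1) ≤ F 0 ^ β := by
      have h7 := mul_le_mul_of_nonneg_left hG (mul_nonneg hkβ.le hA.le)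
      have e1 : (F k ^ β * F 0 ^ β) * ((F 0 ^ β)⁻¹ + c * β * (k : ℝ))
          = F k ^ β + F k ^ β * F 0 ^ β * (c * β * (k : ℝ)) := by
        field_simp
      have e2 : (F k ^ β * F 0 ^ β) * (F k ^ β)⁻¹ = F 0 ^ β := by
        rw [mul_comm (F k ^ β) (F 0 ^ β), mul_assoc,
          mul_inv_cancel₀ hkβ.ne', mul_one]
      nlinarith [h7, e1, e2]
    have hle' : F k ^ β ≤ F 0 ^ β / (F 0 ^ β * c * β * (k : ℝ) + 1) := by
      rw [le_div_iff₀ hD]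
      exact hle
    have hfin := Real.rpow_le_rpow hkβ.le hle' (by positivity : (0:ℝ) ≤ 1 / β)
    rwa [← Real.rpow_mul (hnn k), mul_one_div_cancel hβne, Real.rpow_one] at hfin
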